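/- Let R be a commutative ring and q ∈ R. For all natural numbers n and s: ([s]_q)^n = \sum_{k=0}^{n} S_q(n,k) * [s]_{q,k}, where [s]_{q,k} = \prod_{i=0}^{k-1} [s-i]_q is the q-falling factorial. -/

import Mathlib

/-- The q-integer [n]_q. -/
def qInt {R : Type*} [CommRing R] (q : R) (n : ℕ) : R :=
  ∑ i ∈ Finset.range n, q ^ i

/-- The q-Stirling numbers of the second kind. -/
def qStirling {R : Type*} [CommRing R] (q : R) : ℕ → ℕ → R
  | 0, 0 => 1
  | 0, _ + 1 => 0
  | _ + 1, 0 => 0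
  | n + 1, k + 1 => q ^ k * qStirling q n k + qInt q (k + 1) * qStirling q n (k + 1)

lemma qInt_zero {R : Type*} [CommRing R] (q : R) : qInt q 0 = 0 := by simp [qInt]

lemma qInt_add {R : Type*} [CommRing R] (q : R) (a b : ℕ) :
    qInt q (a + b) = qInt q a + q ^ a * qInt q b := by
  unfold qInt
  rw [Finset.sum_range_add, Finset.mul_sum]
  simp [pow_add]

lemma qStirling_eq_zero {R : Type*} [CommRing R] (q : R) :
    ∀ n k : ℕ, n < k → qStirling q n k = 0 := by
  intro n
  induction n with
  | zero => intro k hk; match k, hk with | k + 1, _ => simp [qStirling]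
  | succ n ih =>
    intro k hk
    match k, hk with
    | k + 1, hk =>
      have h1 : n < k := Nat.lt_of_succ_lt_succ hk
      rw [qStirling, ih k h1, ih (k + 1) (h1.trans (Nat.lt_succ_self k))]
      ring

lemma fall_key {R : Type*} [CommRing R] (q : R) (s k : ℕ) :
    (∏ i ∈ Finset.range k, qInt q (s - i)) * qInt q s =
      qInt q k * ∏ i ∈ Finset.range k, qInt q (s - i) +
        q ^ k * ∏ i ∈ Finset.range (k + 1), qInt q (s - i) := by
  rcases le_or_gt k s with h | h
  · have hs : k + (s - k) = s := Nat.add_sub_cancel' h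
    have : qInt q s = qInt q k + q ^ k * qInt q (s - k) := by
      conv_lhs => rw [← hs, qInt_add]
    rw [this, Finset.prod_range_succ]
    ring
  · have h0 : ∏ i ∈ Finset.range k, qInt q (s - i) = 0 :=
      Finset.prod_eq_zero (Finset.mem_range.mpr h) (by simp [qInt_zero])
    have h1 : ∏ i ∈ Finset.range (k + 1), qInt q (s - i) = 0 :=
      Finset.prod_eq_zero (Finset.mem_range.mpr (h.trans (Nat.lt_succ_self k)))
        (by simp [qInt_zero])
    rw [h0, h1]
    ring

/-- Expansion of powers of q-integers via q-Stirling numbers and q-falling factorials. -/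
theorem qInt_pow_eq_sum_qStirling {R : Type*} [CommRing R] (q : R) (n s : ℕ) :
    (qInt q s) ^ n =
      ∑ k ∈ Finset.range (n + 1),
        qStirling q n k * ∏ i ∈ Finset.range k, qInt q (s - i) := by
  induction n with
  | zero => simp [qStirling]
  | succ n ih =>
    rw [pow_succ, ih, Finset.sum_mul]
    have lhs_eq :
        ∑ k ∈ Finset.range (n + 1),
            (qStirling q n k * ∏ i ∈ Finset.range k, qInt q (s - i)) * qInt q s =
          ∑ k ∈ Finset.range (n + 1),
              qStirling q n k * (qInt q k * ∏ i ∈ Finset.range k, qInt q (s - i)) +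
            ∑ k ∈ Finset.range (n + 1),
              qStirling q n k * (q ^ k * ∏ i ∈ Finset.range (k + 1), qInt q (s - i)) := by
      rw [← Finset.sum_add_distrib]
      refine Finset.sum_congr rfl fun k _ => ?_
      rw [mul_assoc, fall_key]
      ring
    rw [lhs_eq]
    -- rewrite RHS
    rw [Finset.sum_range_succ' _ (n + 1)]
    have h0 : qStirling q (n + 1) 0 * ∏ i ∈ Finset.range 0, qInt q (s - i) = 0 := by
      simp [qStirling]
    rw [h0, add_zero]
    have hrec : ∀ k, qStirling q (n + 1) (k + 1) =
        q ^ k * qStirling q n k + qInt q (k + 1) * qStirling q n (k + 1) := fun k => rfl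
    simp_rw [hrec, add_mul]
    rw [Finset.sum_add_distrib]
    have hA :
        ∑ k ∈ Finset.range (n + 1),
            qStirling q n k * (qInt q k * ∏ i ∈ Finset.range k, qInt q (s - i)) =
          ∑ k ∈ Finset.range (n + 1),
            qInt q (k + 1) * qStirling q n (k + 1) * ∏ i ∈ Finset.range (k + 1), qInt q (s - i) := by
      rw [Finset.sum_range_succ' _ n, Finset.sum_range_succ _ n]
      rw [qStirling_eq_zero q n (n + 1) (Nat.lt_succ_self n)]
      simp only [qInt_zero, mul_zero, zero_mul, add_zero]
      refine Finset.sum_congr rfl fun k _ => ?_; ring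
    have hB :
        ∑ k ∈ Finset.range (n + 1),
            qStirling q n k * (q ^ k * ∏ i ∈ Finset.range (k + 1), qInt q (s - i)) =
          ∑ k ∈ Finset.range (n + 1),
            q ^ k * qStirling q n k * ∏ i ∈ Finset.range (k + 1), qInt q (s - i) := by
      refine Finset.sum_congr rfl fun k _ => ?_; ring
    rw [hA, hB]
    ring
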